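/- arXiv:2011.04493 — 4 statements merged into one kernel-verified Lean document; each statement's English description precedes it below -/
import Mathlib

section
/- Let M be a probability measure on a measurable space Z, S : Z → Z a measurable involution with S*M ≪ M, and define the acceptance function α(z) := min(1, d(S*M)/dM(z)). Then α(S(z)) · d(S*M)/dM(z) = α(z) for M-almost every z ∈ Z. -/
open MeasureTheory
open scoped ENNReal

theorem acceptance_balance_identity {Z : Type*} [MeasurableSpace Z]
    (M : Measure Z) [IsProbabilityMeasure M]
    (S : Z → Z) (hS : Measurable S) (hinv : S ∘ S = id)
    (hac : M.map S ≪ M)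
    (α : Z → ℝ≥0∞) (hα : ∀ z, α z = min 1 ((M.map S).rnDeriv M z)) :
    ∀ᵐ z ∂M, α (S z) * (M.map S).rnDeriv M z = α z := by
  have hmap : (M.map S).map S = M := by
    rw [Measure.map_map hS hS, hinv, Measure.map_id]
  have hemb : MeasurableEmbedding S :=
    MeasurableEquiv.measurableEmbedding ⟨⟨S, S, congrFun hinv, congrFun hinv⟩, hS, hS⟩
  have : IsProbabilityMeasure (M.map S) := Measure.isProbabilityMeasure_map hS.aemeasurable
  have hac' : M ≪ M.map S := by
    have := hac.map hS
    rwa [hmap] at this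
  set f := (M.map S).rnDeriv M with hf
  -- g ∘ S = f a.e. M, where g = rnDeriv M (M.map S)
  have h1 : (fun x ↦ M.rnDeriv (M.map S) (S x)) =ᵐ[M] f := by
    have := hemb.rnDeriv_map (M.map S) M
    rwa [hmap] at this
  -- f⁻¹ = g a.e. (M.map S), hence f⁻¹ ∘ S = g ∘ S a.e. M
  have h2 : (fun x ↦ (f (S x))⁻¹) =ᵐ[M] (fun x ↦ M.rnDeriv (M.map S) (S x)) := by
    have h := Measure.inv_rnDeriv (μ := M.map S) (ν := M) hac
    exact hemb.ae_map_iff.mp h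
  have hpos : ∀ᵐ x ∂M, 0 < f x := hac'.ae_le (Measure.rnDeriv_pos hac)
  have hlt : ∀ᵐ x ∂M, f x < ∞ := Measure.rnDeriv_lt_top _ _
  filter_upwards [h1, h2, hpos, hlt] with x h1x h2x hposx hltx
  have hSx : f (S x) = (f x)⁻¹ := by
    have : (f (S x))⁻¹ = f x := h2x.trans h1x
    rw [← this, inv_inv]
  rw [hα, hα, hSx]
  rcases le_total 1 (f x) with h | h
  · have h1' : (f x)⁻¹ ≤ 1 := by
      rw [ENNReal.inv_le_one]; exact h
    rw [min_eq_right h1', min_eq_left h, ENNReal.inv_mul_cancel hposx.ne' hltx.ne]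
  · have h1' : 1 ≤ (f x)⁻¹ := by
      rw [ENNReal.one_le_inv]; exact h
    rw [min_eq_left h1', min_eq_right h, one_mul]
end

section
/- Let (X, Σ_X) and (Y, Σ_Y) be measurable spaces, μ a probability measure on X, V : X × Σ_Y → [0,1] a Markov kernel, and M(dq, dv) = V(q, dv) μ(dq) the associated measure on X × Y. Suppose S : X × Y → X × Y is a measurable involution with S*M ≪ M. Define α(q,v) := min(1, d(S*M)/dM(q,v)) and the Markov kernel P(q, dq̃) = ∫_Y α(q,v) δ_{Π₁(S(q,v))}(dq̃) V(q,dv) + δ_q(dq̃) ∫_Y (1 − α(q,v)) V(q, dv), where Π₁ is projection onto the first coordinate. Then P satisfies detailed balance with respect to μ: P(q, dq̃) μ(dq) = P(q̃, dq) μ(dq̃) as measures on X × X. -/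
open MeasureTheory ProbabilityTheory
open scoped ENNReal

/-- Pushing forward a `withDensity` measure by a measurable involution. -/
lemma aux_map_withDensity {Z : Type*} [MeasurableSpace Z] (ν : Measure Z)
    (S : Z → Z) (hS : Measurable S) (hinv : S ∘ S = id)
    (g : Z → ℝ≥0∞) (hg : Measurable g) :
    (ν.withDensity (g ∘ S)).map S = (ν.map S).withDensity g := by
  ext A hA
  rw [Measure.map_apply hS hA, withDensity_apply _ (hS hA), withDensity_apply _ hA,
    setLIntegral_map hA hg hS]
  rfl

theorem detailed_balance_of_involution
    {X Y : Type*} [MeasurableSpace X] [MeasurableSpace Y]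
    (μ : Measure X) [IsProbabilityMeasure μ]
    (V : Kernel X Y) [IsMarkovKernel V]
    (M : Measure (X × Y)) (hM : M = μ.compProd V)
    (S : X × Y → X × Y) (hS : Measurable S) (hinv : S ∘ S = id)
    (hac : M.map S ≪ M)
    (α : X → Y → ℝ≥0∞)
    (hα : ∀ q v, α q v = min 1 ((M.map S).rnDeriv M (q, v)))
    (P : X → Measure X)
    (hP : ∀ q, P q =
      ((V q).withDensity (α q)).map (fun v => (S (q, v)).1)
        + (∫⁻ v, (1 - α q v) ∂(V q)) • Measure.dirac q) :
    ∀ φ : X → X → ℝ≥0∞, Measurable (Function.uncurry φ) →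
      ∫⁻ q, ∫⁻ q', φ q q' ∂(P q) ∂μ = ∫⁻ q', ∫⁻ q, φ q q' ∂(P q') ∂μ := by
  intro φ hφ
  have hMP : IsProbabilityMeasure M := by rw [hM]; infer_instance
  have hSS : ∀ p, S (S p) = p := fun p => congrFun hinv p
  set f : X × Y → ℝ≥0∞ := (M.map S).rnDeriv M with hfdef
  have hf : Measurable f := Measure.measurable_rnDeriv _ _
  have hMapP : IsProbabilityMeasure (M.map S) := Measure.isProbabilityMeasure_map hS.aemeasurable
  -- M.map S = M.withDensity f
  have hwd : M.withDensity f = M.map S := Measure.withDensity_rnDeriv_eq _ _ hac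
  -- S involution on measures
  have hmm : (M.map S).map S = M := by
    rw [Measure.map_map hS hS, hinv, Measure.map_id]
  -- key identity : f * (f ∘ S) = 1 a.e.
  have hfS : (f ∘ S) ∘ S = f := by ext p; simp [Function.comp, hSS]
  have hMwd : M.withDensity (f * (f ∘ S)) = M := by
    have h1 : (M.withDensity f).map S = (M.map S).withDensity (f ∘ S) := by
      conv_lhs => rw [← hfS]
      exact aux_map_withDensity M S hS hinv (f ∘ S) (hf.comp hS)
    calc M.withDensity (f * (f ∘ S)) = (M.withDensity f).withDensity (f ∘ S) :=
          withDensity_mul M hf (hf.comp hS)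
      _ = (M.map S).withDensity (f ∘ S) := by rw [hwd]
      _ = (M.withDensity f).map S := h1.symm
      _ = (M.map S).map S := by rw [hwd]
      _ = M := hmm
  have hkey : f * (f ∘ S) =ᵐ[M] 1 := by
    have h1 : (M.withDensity (f * (f ∘ S))).rnDeriv M =ᵐ[M] f * (f ∘ S) :=
      Measure.rnDeriv_withDensity M (hf.mul (hf.comp hS))
    have h2 : (M.withDensity (f * (f ∘ S))).rnDeriv M =ᵐ[M] fun _ => (1 : ℝ≥0∞) := by
      rw [hMwd]; exact Measure.rnDeriv_self M
    filter_upwards [h1.symm.trans h2] with p hp using hp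
  set g : X × Y → ℝ≥0∞ := fun p => min 1 (f p) with hgdef
  have hg : Measurable g := measurable_const.min hf
  -- invariance of g • M under S
  have hinvar : ∀ h : X × Y → ℝ≥0∞, Measurable h →
      ∫⁻ p, g p * h (S p) ∂M = ∫⁻ p, g p * h p ∂M := by
    intro h hh
    set G : X × Y → ℝ≥0∞ := fun p => g p * h p with hGdef
    have hG : Measurable G := hg.mul hh
    have hae : (fun p => g p * h (S p)) =ᵐ[M] fun p => f p * G (S p) := by
      filter_upwards [hkey] with p hp
      simp only [Pi.mul_apply, Function.comp_apply, Pi.one_apply] at hp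
      have hne0 : f p ≠ 0 := by intro h0; rw [h0, zero_mul] at hp; exact one_ne_zero hp.symm
      have hnetop : f p ≠ ⊤ := by
        intro ht
        rw [ht] at hp
        rcases eq_or_ne (f (S p)) 0 with h0 | h0
        · rw [h0, mul_zero] at hp; exact one_ne_zero hp.symm
        · rw [ENNReal.top_mul h0] at hp; exact ENNReal.one_ne_top hp.symm
      have hfsp : f (S p) = (f p)⁻¹ :=
        ENNReal.eq_inv_of_mul_eq_one_left (by rw [mul_comm]; exact hp)
      have hmin : f p * min 1 (f (S p)) = min 1 (f p) := by
        rw [hfsp]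
        rcases le_total (f p) 1 with hle | hle
        · rw [min_eq_left (ENNReal.one_le_inv.mpr hle), mul_one, min_eq_right hle]
        · rw [min_eq_right (ENNReal.inv_le_one.mpr hle),
            ENNReal.mul_inv_cancel hne0 hnetop, min_eq_left hle]
      simp only [hGdef, hgdef]
      rw [← mul_assoc, hmin]
    rw [lintegral_congr_ae hae]
    have h2 : ∫⁻ p, f p * G (S p) ∂M = ∫⁻ p, G (S p) ∂(M.withDensity f) :=
      (lintegral_withDensity_eq_lintegral_mul M hf (hG.comp hS)).symm
    have h3 : ∫⁻ p, G (S p) ∂(M.map S) = ∫⁻ p, G (S (S p)) ∂M :=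
      lintegral_map (hG.comp hS) hS
    simp only [hSS] at h3
    rw [h2, hwd, h3]
  -- measurable ingredients
  have hφ' : Measurable fun p : X × X => φ p.1 p.2 := hφ
  have hT : Measurable fun p : X × Y => (S p).1 := measurable_fst.comp hS
  have hF1 : Measurable fun p : X × Y => φ p.1 ((S p).1) :=
    hφ'.comp (measurable_fst.prodMk hT)
  have hF2 : Measurable fun p : X × Y => φ ((S p).1) p.1 :=
    hφ'.comp (hT.prodMk measurable_fst)
  have hFd : Measurable fun p : X × Y => φ p.1 p.1 :=
    hφ'.comp (measurable_fst.prodMk measurable_fst)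
  have hαq : ∀ q, Measurable (α q) := by
    intro q
    have : α q = fun v => g (q, v) := by
      ext v; exact hα q v
    rw [this]
    exact hg.comp measurable_prodMk_left
  -- expansion of the inner integral
  have hexp : ∀ (q : X) (ψ : X → ℝ≥0∞), Measurable ψ →
      ∫⁻ q', ψ q' ∂(P q) =
        ∫⁻ v, (α q v * ψ ((S (q, v)).1) + (1 - α q v) * ψ q) ∂(V q) := by
    intro q ψ hψ
    have hTq : Measurable fun v : Y => (S (q, v)).1 :=
      hT.comp measurable_prodMk_left
    have h0 : ∫⁻ q', ψ q' ∂(((V q).withDensity (α q)).map (fun v => (S (q, v)).1)) =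
        ∫⁻ v, ψ ((S (q, v)).1) ∂((V q).withDensity (α q)) := lintegral_map hψ hTq
    have h1 : ∫⁻ v, ψ ((S (q, v)).1) ∂((V q).withDensity (α q)) =
        ∫⁻ v, α q v * ψ ((S (q, v)).1) ∂(V q) :=
      lintegral_withDensity_eq_lintegral_mul _ (hαq q) (hψ.comp hTq)
    rw [hP q, lintegral_add_measure, lintegral_smul_measure, lintegral_dirac' q hψ, smul_eq_mul,
      h0, h1, ← lintegral_mul_const _ (f := fun v => 1 - α q v) ((measurable_const.sub (hαq q)))]
    exact (lintegral_add_left ((hαq q).mul (hψ.comp hTq)) _).symm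
  -- rewrite both sides as integrals over M
  have hLHS : ∫⁻ q, ∫⁻ q', φ q q' ∂(P q) ∂μ =
      ∫⁻ p, (g p * φ p.1 ((S p).1) + (1 - g p) * φ p.1 p.1) ∂M := by
    rw [hM, Measure.lintegral_compProd
      (f := fun p : X × Y => g p * φ p.1 ((S p).1) + (1 - g p) * φ p.1 p.1)
      ((hg.mul hF1).add ((measurable_const.sub hg).mul hFd))]
    refine lintegral_congr fun q => ?_
    rw [hexp q (φ q) (hφ'.comp (measurable_prodMk_left))]
    exact lintegral_congr fun v => by rw [hα q v]
  have hRHS : ∫⁻ q', ∫⁻ q, φ q q' ∂(P q') ∂μ =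
      ∫⁻ p, (g p * φ ((S p).1) p.1 + (1 - g p) * φ p.1 p.1) ∂M := by
    rw [hM, Measure.lintegral_compProd
      (f := fun p : X × Y => g p * φ ((S p).1) p.1 + (1 - g p) * φ p.1 p.1)
      ((hg.mul hF2).add ((measurable_const.sub hg).mul hFd))]
    refine lintegral_congr fun q => ?_
    rw [hexp q (fun x => φ x q) (hφ'.comp (measurable_id.prodMk measurable_const))]
    exact lintegral_congr fun v => by rw [hα q v]
  rw [hLHS, hRHS,
    lintegral_add_left (f := fun p : X × Y => g p * φ p.1 ((S p).1)) (hg.mul hF1),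
    lintegral_add_left (f := fun p : X × Y => g p * φ ((S p).1) p.1) (hg.mul hF2)]
  congr 1
  have := hinvar (fun p => φ ((S p).1) p.1) hF2
  simp only [hSS] at this
  exact this
end

section
/- Let X and Y be sets and F : X × Y → X a map such that for each fixed q ∈ X the map F(q, ·) : Y → X is injective with image equal to X (i.e., bijective onto X). Then there exists a unique map S : X × Y → X × Y such that Π₁ ∘ S = F and S ∘ S = identity, given explicitly by S(q, v) = (F(q, v), (F(F(q,v), ·))⁻¹(q)). -/
theorem exists_unique_involution_over_proposal {X Y : Type*} [Nonempty Y]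
    (F : X → Y → X) (hF : ∀ q, Function.Bijective (F q)) :
    (((∀ p : X × Y, ((fun p : X × Y =>
          ((F p.1 p.2, Function.invFun (F (F p.1 p.2)) p.1) : X × Y)) p).1 = F p.1 p.2) ∧
      (fun p : X × Y => ((F p.1 p.2, Function.invFun (F (F p.1 p.2)) p.1) : X × Y)) ∘
        (fun p : X × Y => ((F p.1 p.2, Function.invFun (F (F p.1 p.2)) p.1) : X × Y)) = id)) ∧
    (∀ S : X × Y → X × Y,
      ((∀ p : X × Y, (S p).1 = F p.1 p.2) ∧ S ∘ S = id) →
      S = fun p : X × Y => ((F p.1 p.2, Function.invFun (F (F p.1 p.2)) p.1) : X × Y)) := by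
  have hri : ∀ q x, F q (Function.invFun (F q) x) = x := fun q x =>
    Function.rightInverse_invFun (hF q).2 x
  have hli : ∀ q v, Function.invFun (F q) (F q v) = v := fun q v =>
    Function.leftInverse_invFun (hF q).1 v
  refine ⟨⟨fun p => rfl, ?_⟩, ?_⟩
  · funext p
    obtain ⟨q, v⟩ := p
    simp only [Function.comp_apply, id_eq]
    ext
    · simp [hri]
    · simp [hri, hli]
  · rintro S ⟨h1, h2⟩
    funext p
    obtain ⟨q, v⟩ := p
    have hSp : S (q, v) = (F q v, (S (q, v)).2) := by
      ext
      · exact h1 (q, v)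
      · rfl
    have h3 : S (S (q, v)) = (q, v) := congrFun h2 (q, v)
    have h4 : (S (S (q, v))).1 = F (S (q, v)).1 (S (q, v)).2 := h1 _
    rw [h3] at h4
    have hq : F (F q v) (S (q, v)).2 = q := by rw [h1 (q, v)] at h4; exact h4.symm
    have : (S (q, v)).2 = Function.invFun (F (F q v)) q := by
      apply (hF (F q v)).1
      rw [hq, hri]
    rw [hSp, this]
end

section
/- Let f : ℝ^N → ℝ^N be any C¹ map and define, for time steps δ₁, δ₂ > 0 and n ∈ ℕ, the maps Ξ¹_t(q,v) = (q, v − t f(q)) and Ξ²_t(q,v) = (cos(t) q + sin(t) v, −sin(t) q + cos(t) v) on ℝ^{2N}, the integrator Ŝ = (Ξ¹_{δ₁} ∘ Ξ²_{δ₂} ∘ Ξ¹_{δ₁})ⁿ, and the momentum flip R(q,v) = (q, −v). Then both R ∘ Ξ¹_t and R ∘ Ξ²_t are involutions for every t, and consequently S := R ∘ Ŝ is an involution on ℝ^{2N}. -/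
/-- The velocity-shift map `Ξ¹_t(q, v) = (q, v − t f(q))`. -/
def Xi1 {N : ℕ} (f : (Fin N → ℝ) → (Fin N → ℝ)) (t : ℝ) :
    (Fin N → ℝ) × (Fin N → ℝ) → (Fin N → ℝ) × (Fin N → ℝ) :=
  fun z => (z.1, z.2 - t • f z.1)

/-- The rotation map `Ξ²_t(q, v) = (cos t · q + sin t · v, −sin t · q + cos t · v)`. -/
noncomputable def Xi2 {N : ℕ} (t : ℝ) :
    (Fin N → ℝ) × (Fin N → ℝ) → (Fin N → ℝ) × (Fin N → ℝ) :=
  fun z => (Real.cos t • z.1 + Real.sin t • z.2, -Real.sin t • z.1 + Real.cos t • z.2)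

lemma Xi1_inv {N : ℕ} (f : (Fin N → ℝ) → (Fin N → ℝ)) (t : ℝ)
    (R : (Fin N → ℝ) × (Fin N → ℝ) → (Fin N → ℝ) × (Fin N → ℝ))
    (hR : R = fun z => (z.1, -z.2)) (z) :
    R (Xi1 f t (R (Xi1 f t z))) = z := by
  subst hR
  simp only [Xi1]
  ext i <;> simp

lemma Xi2_inv {N : ℕ} (t : ℝ)
    (R : (Fin N → ℝ) × (Fin N → ℝ) → (Fin N → ℝ) × (Fin N → ℝ))
    (hR : R = fun z => (z.1, -z.2)) (z) :
    R (Xi2 t (R (Xi2 t z))) = z := by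
  subst hR
  have h := Real.sin_sq_add_cos_sq t
  ext i
  · simp [Xi2]; linear_combination z.1 i * h
  · simp [Xi2]; linear_combination z.2 i * h

theorem momentum_flip_integrator_involution {N : ℕ}
    (f : (Fin N → ℝ) → (Fin N → ℝ)) (hf : ContDiff ℝ 1 f)
    (δ₁ δ₂ : ℝ) (hδ₁ : 0 < δ₁) (hδ₂ : 0 < δ₂) (n : ℕ)
    (R : (Fin N → ℝ) × (Fin N → ℝ) → (Fin N → ℝ) × (Fin N → ℝ))
    (hR : R = fun z => (z.1, -z.2))
    (Shat : (Fin N → ℝ) × (Fin N → ℝ) → (Fin N → ℝ) × (Fin N → ℝ))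
    (hShat : Shat = (Xi1 f δ₁ ∘ Xi2 δ₂ ∘ Xi1 f δ₁)^[n]) :
    (∀ t : ℝ, (R ∘ Xi1 f t) ∘ (R ∘ Xi1 f t) = id) ∧
    (∀ t : ℝ, (R ∘ Xi2 (N := N) t) ∘ (R ∘ Xi2 (N := N) t) = id) ∧
    (R ∘ Shat) ∘ (R ∘ Shat) = id := by
  have hRR : ∀ z, R (R z) = z := by subst hR; intro z; simp
  have h1 : ∀ t z, R (Xi1 f t (R (Xi1 f t z))) = z := fun t z => Xi1_inv f t R hR z
  have h2 : ∀ t z, R (Xi2 (N := N) t (R (Xi2 t z))) = z := fun t z => Xi2_inv t R hR z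
  -- flipped versions: Ξ (R (Ξ (R z))) = z
  have h1' : ∀ t z, Xi1 f t (R (Xi1 f t (R z))) = z := by
    intro t z
    have := congrArg R (h1 t (R z))
    rwa [hRR, hRR] at this
  have h2' : ∀ t z, Xi2 (N := N) t (R (Xi2 t (R z))) = z := by
    intro t z
    have := congrArg R (h2 t (R z))
    rwa [hRR, hRR] at this
  set A := Xi1 f δ₁ ∘ Xi2 δ₂ ∘ Xi1 f δ₁ with hA
  -- A (R (A z)) = R z  (palindromic conjugation)
  have hARA : ∀ z, A (R (A z)) = R z := by
    intro z
    show Xi1 f δ₁ (Xi2 δ₂ (Xi1 f δ₁ (R (Xi1 f δ₁ (Xi2 δ₂ (Xi1 f δ₁ z)))))) = R z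
    have e1 : Xi1 f δ₁ (R (Xi1 f δ₁ (Xi2 δ₂ (Xi1 f δ₁ z))))
        = R (Xi2 δ₂ (Xi1 f δ₁ z)) := by
      have := h1' δ₁ (R (Xi2 δ₂ (Xi1 f δ₁ z)))
      rwa [hRR] at this
    rw [e1]
    have e2 : Xi2 δ₂ (R (Xi2 δ₂ (Xi1 f δ₁ z))) = R (Xi1 f δ₁ z) := by
      have := h2' δ₂ (R (Xi1 f δ₁ z))
      rwa [hRR] at this
    rw [e2]
    have := h1' δ₁ (R z)
    rwa [hRR] at this
  have hmain : ∀ m z, R (A^[m] (R (A^[m] z))) = z := by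
    intro m
    induction m with
    | zero => intro z; simp [hRR]
    | succ k ih =>
      intro z
      have step : A^[k+1] (R (A^[k+1] z)) = A^[k] (R (A^[k] z)) := by
        rw [Function.iterate_succ_apply' A k z, Function.iterate_succ_apply A k, hARA]
      rw [step, ih]
  refine ⟨fun t => funext (h1 t), fun t => funext (h2 t), funext fun z => ?_⟩
  simp only [Function.comp_apply, hShat, ← hA]
  exact hmain n z
end
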